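/- Let f be a continuous function on [0,1] with ‖f‖₁ > 0 and let p be a polynomial of degree at most n ≥ 1 with ‖p‖₁ ≤ 2‖f‖₁. Then the function ω_p(ε) = ε/(4n²(n+1)²‖f‖₁) is a modulus of uniform continuity for p on [0,1]: for all ε > 0 and x, y ∈ [0,1] with |x−y| < ω_p(ε), |p(x)−p(y)| < ε. -/

import Mathlib

open Polynomial intervalIntegral Finset

noncomputable section Legendre9

def S9 : ℝ[X] := X ^ 2 - X
def L9 : ℝ[X] := C 2 * X - C 1

def R9 (k : ℕ) : ℝ[X] := S9 ^ k
def Q9 (k : ℕ) : ℝ[X] := derivative^[k] (R9 k)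

lemma deriv_S9 : derivative S9 = L9 := by
  simp only [S9, L9, derivative_sub, derivative_X_pow, derivative_X]
  rw [C_1]; push_cast; ring

lemma deriv_L9 : derivative L9 = C 2 := by simp [L9]

lemma iterate_derivative_add' (k : ℕ) (p q : ℝ[X]) :
    derivative^[k] (p + q) = derivative^[k] p + derivative^[k] q := by
  induction k generalizing p q with
  | zero => rfl
  | succ k ih => simp [Function.iterate_succ_apply, derivative_add, ih]

lemma H2 (m : ℕ) (p : ℝ[X]) :
    derivative^[m + 1] (L9 * p) =
      L9 * derivative^[m + 1] p + C (2 * ((m : ℝ) + 1)) * derivative^[m] p := by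
  induction m generalizing p with
  | zero => simp [derivative_mul, deriv_L9]; ring
  | succ m ih =>
      rw [Function.iterate_succ_apply derivative (m + 1) (L9 * p),
        derivative_mul, deriv_L9, iterate_derivative_add', iterate_derivative_C_mul,
        ih (derivative p), Function.iterate_succ_apply derivative (m + 1) p,
        Function.iterate_succ_apply derivative m p]
      push_cast
      simp only [C_add, C_mul, C_1]
      ring

lemma H1 (m : ℕ) (p : ℝ[X]) :
    derivative^[m + 2] (S9 * p) =
      S9 * derivative^[m + 2] p + C ((m : ℝ) + 2) * (L9 * derivative^[m + 1] p)
        + C (((m : ℝ) + 2) * ((m : ℝ) + 1)) * derivative^[m] p := by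
  induction m generalizing p with
  | zero =>
      show derivative (derivative (S9 * p)) =
        S9 * derivative (derivative p) + _ * (L9 * derivative p) + _ * p
      simp only [derivative_mul, deriv_S9, deriv_L9, derivative_add]
      push_cast
      simp only [C_add, C_mul, map_ofNat, map_one, map_zero]
      ring
  | succ m ih =>
      rw [Function.iterate_succ_apply derivative (m + 2) (S9 * p),
        derivative_mul, deriv_S9, iterate_derivative_add',
        H2 (m + 1) p, ih (derivative p),
        Function.iterate_succ_apply derivative (m + 2) p,
        Function.iterate_succ_apply derivative (m + 1) p,
        Function.iterate_succ_apply derivative m p]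
      push_cast
      simp only [C_add, C_mul, map_ofNat, map_one, map_zero]
      ring


section ODE
open Function

lemma base9 (m : ℕ) :
    S9 * derivative (R9 (m + 1)) = C ((m : ℝ) + 1) * (L9 * R9 (m + 1)) := by
  rw [R9, derivative_pow, deriv_S9, Nat.add_sub_cancel]
  push_cast
  ring

lemma ODE9 (m : ℕ) :
    S9 * derivative^[m + 3] (R9 (m + 1)) + L9 * derivative^[m + 2] (R9 (m + 1))
      = C (((m : ℝ) + 1) * ((m : ℝ) + 2)) * derivative^[m + 1] (R9 (m + 1)) := by
  have h := congrArg (derivative^[m + 2]) (base9 m)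
  rw [H1 m (derivative (R9 (m + 1))), iterate_derivative_C_mul, H2 (m + 1) (R9 (m + 1))] at h
  rw [← Function.iterate_succ_apply derivative (m + 2) (R9 (m+1)),
    ← Function.iterate_succ_apply derivative (m + 1) (R9 (m+1)),
    ← Function.iterate_succ_apply derivative m (R9 (m+1))] at h
  simp only [Nat.succ_eq_add_one, show m + 2 + 1 = m + 3 from rfl,
    show m + 1 + 1 = m + 2 from rfl] at h
  push_cast at h ⊢
  simp only [C_add, C_mul, map_ofNat, map_one, map_zero] at h ⊢
  linear_combination h

lemma ODE9' (m : ℕ) :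
    S9 * derivative^[m + 4] (R9 (m + 1)) + C 2 * (L9 * derivative^[m + 3] (R9 (m + 1)))
      = C (((m : ℝ) + 1) * ((m : ℝ) + 2) - 2) * derivative^[m + 2] (R9 (m + 1)) := by
  have h := congrArg derivative (ODE9 m)
  simp only [derivative_add, derivative_mul, deriv_S9, deriv_L9, derivative_C,
    ← Function.iterate_succ_apply' derivative] at h
  simp only [Nat.succ_eq_add_one, show m + 3 + 1 = m + 4 from rfl,
    show m + 2 + 1 = m + 3 from rfl, show m + 1 + 1 = m + 2 from rfl] at h
  push_cast at h ⊢
  simp only [C_add, C_mul, C_sub, map_ofNat, map_one, map_zero] at h ⊢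
  linear_combination h

end ODE

section Lyap

lemma lyap9 (A : ℝ[X]) (c μ : ℝ) (hc : 1 ≤ c) (hμ : 0 < μ)
    (hODE : S9 * derivative (derivative A) + C c * (L9 * derivative A) = C μ * A) :
    ∀ x ∈ Set.Icc (0:ℝ) 1, (A.eval x) ^ 2 ≤ max ((A.eval 0) ^ 2) ((A.eval 1) ^ 2) := by
  set G : ℝ[X] := C μ * (A * A) - S9 * (derivative A * derivative A) with hGdef
  have hG : derivative G = C (2 * c - 1) * (L9 * (derivative A * derivative A)) := by
    simp only [hGdef, derivative_sub, derivative_mul, derivative_C, deriv_S9, zero_mul]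
    simp only [C_sub, C_mul, map_ofNat, map_one]
    linear_combination (-2 * derivative A) * hODE
  set g : ℝ → ℝ := fun x => G.eval x with hgdef
  have hderiv : ∀ x : ℝ, deriv g x = (2 * c - 1) * ((2 * x - 1) * (eval x (derivative A)) ^ 2) := by
    intro x
    rw [hgdef]
    rw [Polynomial.deriv, hG]
    simp only [L9, eval_mul, eval_sub, eval_C, eval_X, eval_one]
    ring
  have hdg : Differentiable ℝ g := by
    rw [hgdef]; exact Polynomial.differentiable _
  have hcont : Continuous g := hdg.continuous
  have h1 : AntitoneOn g (Set.Icc (0:ℝ) (1/2)) := by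
    apply antitoneOn_of_deriv_nonpos (convex_Icc _ _) (hcont.continuousOn)
      (fun x _ => (hdg x).differentiableWithinAt)
    intro x hx
    rw [interior_Icc] at hx
    rw [hderiv x]
    nlinarith [mul_nonneg (mul_nonneg (show (0:ℝ) ≤ 2*c-1 by linarith)
      (show (0:ℝ) ≤ 1-2*x by linarith [hx.2])) (sq_nonneg (eval x (derivative A)))]
  have h2 : MonotoneOn g (Set.Icc (1/2:ℝ) 1) := by
    apply monotoneOn_of_deriv_nonneg (convex_Icc _ _) (hcont.continuousOn)
      (fun x _ => (hdg x).differentiableWithinAt)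
    intro x hx
    rw [interior_Icc] at hx
    rw [hderiv x]
    exact mul_nonneg (by linarith) (mul_nonneg (by linarith [hx.1]) (sq_nonneg _))
  intro x hx
  have hgx : ∀ y : ℝ, g y = μ * (eval y A) ^ 2 - (y ^ 2 - y) * (eval y (derivative A)) ^ 2 := by
    intro y
    rw [hgdef]
    simp only [hGdef, eval_sub, eval_mul, eval_C, S9, eval_pow, eval_X]
    ring
  have key : g x ≤ max (g 0) (g 1) := by
    rcases le_total x (1/2) with h | h
    · exact le_max_of_le_left (h1 (Set.mem_Icc.mpr ⟨le_refl 0, by linarith [hx.1]⟩) ⟨hx.1, h⟩ hx.1)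
    · exact le_max_of_le_right (h2 ⟨h, hx.2⟩ (Set.mem_Icc.mpr ⟨by linarith, le_refl 1⟩) hx.2)
  have hg0 : g 0 = μ * (eval 0 A) ^ 2 := by rw [hgx]; ring
  have hg1 : g 1 = μ * (eval 1 A) ^ 2 := by rw [hgx]; ring
  have hlow : μ * (eval x A) ^ 2 ≤ g x := by
    rw [hgx]
    nlinarith [mul_nonneg (mul_nonneg hx.1 (show (0:ℝ) ≤ 1 - x by linarith [hx.2]))
      (sq_nonneg (eval x (derivative A)))]
  rw [hg0, hg1] at key
  have hfin : μ * eval x A ^ 2 ≤ μ * max (eval 0 A ^ 2) (eval 1 A ^ 2) := by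
    rcases max_cases (μ * (eval 0 A)^2) (μ * (eval 1 A)^2) with ⟨he, _⟩ | ⟨he, _⟩ <;>
      rw [he] at key
    · exact le_trans (le_trans hlow key) (mul_le_mul_of_nonneg_left (le_max_left _ _) hμ.le)
    · exact le_trans (le_trans hlow key) (mul_le_mul_of_nonneg_left (le_max_right _ _) hμ.le)
  exact le_of_mul_le_mul_left hfin hμ

end Lyap

section Vals
open Nat

lemma Q9_def (k : ℕ) : derivative^[k] (R9 k) = Q9 k := rfl

def r9 (k : ℕ) : ℕ → ℝ[X]
  | 0 => 1
  | j + 1 => C ((k - j : ℕ) : ℝ) * (L9 * r9 k j) + S9 * derivative (r9 k j)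

lemma fact9 : ∀ j i : ℕ, derivative^[j] (R9 (j + i)) = S9 ^ i * r9 (j + i) j := by
  intro j
  induction j with
  | zero => intro i; simp [r9, R9]
  | succ j ih =>
      intro i
      have e1 : j + 1 + i = j + (i + 1) := by omega
      rw [Function.iterate_succ_apply' derivative j (R9 (j + 1 + i)), e1, ih (i + 1)]
      rw [derivative_mul, derivative_pow, deriv_S9, Nat.add_sub_cancel]
      have e2 : j + (i + 1) - j = i + 1 := by omega
      rw [r9, e2]
      push_cast
      ring

lemma Q9_eq (k : ℕ) : Q9 k = r9 k k := by
  have := fact9 k 0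
  simpa [Q9] using this

lemma eval_L9_one : L9.eval 1 = 1 := by norm_num [L9]
lemma eval_L9_zero : L9.eval 0 = -1 := by simp [L9]
lemma eval_S9_one : S9.eval 1 = 0 := by simp [S9]
lemma eval_S9_zero : S9.eval 0 = 0 := by simp [S9]

lemma r9_eval_one (k : ℕ) : ∀ j, (r9 k j).eval 1 = (k.descFactorial j : ℝ) := by
  intro j
  induction j with
  | zero => simp [r9]
  | succ j ih =>
      rw [r9, Nat.descFactorial_succ]
      simp only [eval_add, eval_mul, eval_C, eval_L9_one, eval_S9_one, ih]
      push_cast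
      ring

lemma r9_eval_zero (k : ℕ) : ∀ j, (r9 k j).eval 0 = (-1) ^ j * (k.descFactorial j : ℝ) := by
  intro j
  induction j with
  | zero => simp [r9]
  | succ j ih =>
      rw [r9, Nat.descFactorial_succ]
      simp only [eval_add, eval_mul, eval_C, eval_L9_zero, eval_S9_zero, ih]
      push_cast
      ring

lemma Q9_eval_one (k : ℕ) : (Q9 k).eval 1 = (k ! : ℝ) := by
  rw [Q9_eq, r9_eval_one, Nat.descFactorial_self]

lemma Q9_eval_zero (k : ℕ) : (Q9 k).eval 0 = (-1) ^ k * (k ! : ℝ) := by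
  rw [Q9_eq, r9_eval_zero, Nat.descFactorial_self]

lemma neg_one_pow_sq9 (j : ℕ) : ((-1:ℝ) ^ j) ^ 2 = 1 := by
  rw [← pow_mul, mul_comm, pow_mul, neg_one_sq, one_pow]

lemma Q9_eval_zero_sq (k : ℕ) : (Q9 k).eval 0 ^ 2 = ((k ! : ℝ)) ^ 2 := by
  rw [Q9_eval_zero, mul_pow, neg_one_pow_sq9, one_mul]

lemma dQ9 (k : ℕ) : derivative (Q9 k) = derivative^[k + 1] (R9 k) :=
  (Function.iterate_succ_apply' derivative k (R9 k)).symm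

lemma ddQ9 (k : ℕ) : derivative (derivative (Q9 k)) = derivative^[k + 2] (R9 k) := by
  rw [dQ9, ← Function.iterate_succ_apply' derivative (k + 1) (R9 k)]

lemma dQ9_eval_one (m : ℕ) :
    (derivative (Q9 (m + 1))).eval 1 = (((m : ℝ) + 1) * ((m : ℝ) + 2)) * ((m + 1)! : ℝ) := by
  have h := congrArg (eval 1) (ODE9 m)
  rw [show m + 2 = (m + 1) + 1 from rfl, ← dQ9 (m + 1), Q9_def] at h
  simp only [eval_add, eval_mul, eval_C, eval_S9_one, eval_L9_one, zero_mul, one_mul,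
    zero_add] at h
  rw [h, Q9_eval_one]

lemma dQ9_eval_zero_sq (m : ℕ) :
    (derivative (Q9 (m + 1))).eval 0 ^ 2
      = ((((m : ℝ) + 1) * ((m : ℝ) + 2)) * ((m + 1)! : ℝ)) ^ 2 := by
  have h := congrArg (eval 0) (ODE9 m)
  rw [show m + 2 = (m + 1) + 1 from rfl, ← dQ9 (m + 1), Q9_def] at h
  simp only [eval_add, eval_mul, eval_C, eval_S9_zero, eval_L9_zero, zero_mul,
    zero_add] at h
  have h0 : (derivative (Q9 (m + 1))).eval 0
      = -((((m : ℝ) + 1) * ((m : ℝ) + 2)) * ((-1) ^ (m+1) * ((m + 1)! : ℝ))) := by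
    rw [← Q9_eval_zero]
    linarith [h]
  rw [h0]
  have expand : (-((((m : ℝ) + 1) * ((m : ℝ) + 2)) * ((-1) ^ (m+1) * ((m + 1)! : ℝ)))) ^ 2
      = ((-1 : ℝ) ^ (m+1)) ^ 2 * ((((m : ℝ) + 1) * ((m : ℝ) + 2)) * ((m + 1)! : ℝ)) ^ 2 := by
    ring
  rw [expand, neg_one_pow_sq9, one_mul]

lemma abs_le_of_sq_le_sq9 (a b : ℝ) (hb : 0 ≤ b) (h : a ^ 2 ≤ b ^ 2) : |a| ≤ b := by
  nlinarith [sq_abs a, abs_nonneg a]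

lemma B1 (k : ℕ) : ∀ x ∈ Set.Icc (0:ℝ) 1, |(Q9 k).eval x| ≤ (k ! : ℝ) := by
  intro x hx
  match k with
  | 0 =>
      have : Q9 0 = 1 := by simp [Q9, R9]
      simp [this]
  | (m + 1) =>
      apply abs_le_of_sq_le_sq9 _ _ (by positivity)
      have hODE : S9 * derivative (derivative (Q9 (m+1))) + C (1:ℝ) * (L9 * derivative (Q9 (m+1)))
          = C (((m:ℝ)+1) * ((m:ℝ)+2)) * Q9 (m+1) := by
        rw [ddQ9, dQ9, map_one, one_mul]
        rw [show m + 1 + 2 = m + 3 from rfl, show m + 1 + 1 = m + 2 from rfl]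
        have h := ODE9 m
        rw [Q9_def] at h
        exact h
      have hb := lyap9 (Q9 (m+1)) 1 (((m:ℝ)+1) * ((m:ℝ)+2)) le_rfl (by positivity) hODE x hx
      rw [Q9_eval_one, Q9_eval_zero_sq, max_self] at hb
      exact hb

lemma B2 (k : ℕ) : ∀ x ∈ Set.Icc (0:ℝ) 1,
    |(derivative (Q9 k)).eval x| ≤ (k : ℝ) * ((k : ℝ) + 1) * (k ! : ℝ) := by
  intro x hx
  match k with
  | 0 =>
      have : Q9 0 = 1 := by simp [Q9, R9]
      simp [this]
  | 1 =>
      have h1 : Q9 1 = L9 := by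
        simp only [Q9, R9, pow_one, Function.iterate_one, deriv_S9]
      rw [h1, deriv_L9]
      norm_num
  | (m + 2) =>
      apply abs_le_of_sq_le_sq9 _ _ (by positivity)
      have hODE : S9 * derivative (derivative (derivative (Q9 (m+2))))
            + C (2:ℝ) * (L9 * derivative (derivative (Q9 (m+2))))
          = C ((((m:ℝ)+1)+1) * (((m:ℝ)+1)+2) - 2) * derivative (Q9 (m+2)) := by
        rw [dQ9]
        rw [← Function.iterate_succ_apply' derivative (m + 2 + 1) (R9 (m+2))]
        rw [← Function.iterate_succ_apply' derivative (m + 2 + 1 + 1) (R9 (m+2))]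
        have h := ODE9' (m + 1)
        push_cast at h ⊢
        exact h
      have hμ : (0:ℝ) < (((m:ℝ)+1)+1) * (((m:ℝ)+1)+2) - 2 := by
        nlinarith [Nat.cast_nonneg (α := ℝ) m]
      have hb := lyap9 (derivative (Q9 (m+2))) 2 ((((m:ℝ)+1)+1) * (((m:ℝ)+1)+2) - 2)
        (by norm_num) hμ hODE x hx
      rw [show m + 2 = (m+1) + 1 from rfl] at hb ⊢
      rw [dQ9_eval_one (m+1), dQ9_eval_zero_sq (m+1), max_self] at hb
      calc (derivative (Q9 ((m+1)+1))).eval x ^ 2 ≤ _ := hb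
        _ = ((((m+1)+1 : ℕ) : ℝ) * ((((m+1)+1 : ℕ) : ℝ) + 1) * (((m+1)+1)! : ℝ)) ^ 2 := by
            push_cast
            ring

end Vals

section Integr
open Nat

lemma contEval (w : ℝ[X]) : Continuous (fun x : ℝ => w.eval x) := w.continuous

lemma intble9 (u v : ℝ[X]) :
    IntervalIntegrable (fun x => u.eval x * v.eval x) MeasureTheory.volume 0 1 :=
  ((contEval u).mul (contEval v)).intervalIntegrable 0 1

lemma FTC9 (w : ℝ[X]) :
    ∫ x in (0:ℝ)..1, (derivative w).eval x = w.eval 1 - w.eval 0 := by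
  apply intervalIntegral.integral_deriv_eq_sub' (fun x => w.eval x)
  · exact funext fun x => Polynomial.deriv w
  · exact fun x _ => w.differentiableAt
  · exact (contEval _).continuousOn

lemma IBP9 (u v : ℝ[X]) :
    ∫ x in (0:ℝ)..1, (derivative u).eval x * v.eval x
      = u.eval 1 * v.eval 1 - u.eval 0 * v.eval 0
        - ∫ x in (0:ℝ)..1, u.eval x * (derivative v).eval x := by
  have h1 := FTC9 (u * v)
  simp only [derivative_mul, eval_add, eval_mul] at h1
  rw [intervalIntegral.integral_add (intble9 (derivative u) v) (intble9 u (derivative v))] at h1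
  linarith [h1]

lemma vanish9 (j i : ℕ) :
    (derivative^[j] (R9 (j + (i + 1)))).eval 0 = 0
      ∧ (derivative^[j] (R9 (j + (i + 1)))).eval 1 = 0 := by
  rw [fact9 j (i + 1)]
  constructor <;> simp [eval_pow, eval_S9_zero, eval_S9_one]

lemma key9 (k : ℕ) : ∀ j, j ≤ k → ∀ s : ℝ[X],
    ∫ x in (0:ℝ)..1, (Q9 k).eval x * s.eval x
      = (-1:ℝ)^j * ∫ x in (0:ℝ)..1, (derivative^[k-j] (R9 k)).eval x * (derivative^[j] s).eval x := by
  intro j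
  induction j with
  | zero =>
      intro _ s
      rw [Nat.sub_zero, Q9_def]
      simp
  | succ j ih =>
      intro hj s
      have prev := ih (by omega) s
      have e : k - j = (k - (j + 1)) + 1 := by omega
      rw [e, Function.iterate_succ_apply' derivative (k - (j+1)) (R9 k)] at prev
      have hv := vanish9 (k - (j + 1)) j
      rw [show k - (j + 1) + (j + 1) = k from by omega] at hv
      rw [IBP9 (derivative^[k - (j+1)] (R9 k)) (derivative^[j] s), hv.1, hv.2,
        ← Function.iterate_succ_apply' derivative j s] at prev
      rw [prev]
      ring

lemma natDegree_S9 : S9.natDegree = 2 := by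
  unfold S9
  compute_degree!

lemma monic_S9 : S9.Monic := by
  unfold S9
  apply Polynomial.monic_X_pow_sub
  exact lt_of_le_of_lt Polynomial.degree_X_le (by norm_num)

lemma natDegree_R9 (k : ℕ) : (R9 k).natDegree = 2 * k := by
  rw [R9, monic_S9.natDegree_pow, natDegree_S9]
  ring

end Integr

section Norms
open Nat

lemma topDeriv9 (k : ℕ) : derivative^[2 * k] (R9 k) = C (((2 * k)! : ℝ)) := by
  have hd : (derivative^[2 * k] (R9 k)).natDegree ≤ 0 := by
    have := Polynomial.natDegree_iterate_derivative (R9 k) (2 * k)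
    rw [natDegree_R9] at this
    omega
  have hC := Polynomial.eq_C_of_natDegree_le_zero hd
  have hnd : (S9 ^ k).natDegree = 2 * k := natDegree_R9 k
  rw [hC, Polynomial.coeff_iterate_derivative]
  rw [show R9 k = S9 ^ k from rfl]
  rw [show (0 + 2 * k) = (S9 ^ k).natDegree from by rw [hnd]; omega]
  rw [(monic_S9.pow k).coeff_natDegree, hnd]
  simp [Nat.descFactorial_self, nsmul_eq_mul]

lemma orth9 {j k : ℕ} (h : j < k) :
    ∫ x in (0:ℝ)..1, (Q9 k).eval x * (Q9 j).eval x = 0 := by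
  rw [key9 k k le_rfl (Q9 j)]
  have hz : derivative^[k] (Q9 j) = 0 := by
    rw [Q9, ← Function.iterate_add_apply]
    apply Polynomial.iterate_derivative_eq_zero
    rw [natDegree_R9]
    omega
  rw [hz]
  simp

lemma beta9 : ∀ b a : ℕ, ∫ x in (0:ℝ)..1, x ^ a * (1 - x) ^ b
    = ((a ! : ℝ) * (b ! : ℝ)) / ((a + b + 1)! : ℝ) := by
  intro b
  induction b with
  | zero =>
      intro a
      simp only [pow_zero, mul_one, integral_pow]
      rw [show a + 0 + 1 = a + 1 from rfl, Nat.factorial_succ]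
      have : ((a:ℝ) + 1) ≠ 0 := by positivity
      push_cast
      field_simp
      simp
  | succ b ih =>
      intro a
      have hane : ((a:ℝ) + 1) ≠ 0 := by positivity
      have hIBP := IBP9 (C (1/((a:ℝ)+1)) * X ^ (a+1)) ((1 - X) ^ (b+1))
      have hdu : derivative (C (1/((a:ℝ)+1)) * X ^ (a+1)) = C (1/((a:ℝ)+1)) * (C ((a:ℝ)+1) * X ^ a) := by
        rw [derivative_C_mul, derivative_X_pow]
        rw [Nat.add_sub_cancel]
        push_cast
        ring
      have hdv : derivative ((1 - X : ℝ[X]) ^ (b+1)) = C (-((b:ℝ)+1)) * (1 - X) ^ b := by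
        rw [derivative_pow, Nat.add_sub_cancel]
        have : derivative (1 - X : ℝ[X]) = C (-1) := by
          simp
        rw [this]
        push_cast
        rw [mul_right_comm, ← C_mul]
        congr 1
        ring
      rw [hdu, hdv] at hIBP
      -- simplify evals
      simp only [eval_mul, eval_C, eval_pow, eval_sub, eval_one, eval_X] at hIBP
      norm_num at hIBP
      -- hIBP : ∫ 1/(a+1) * ((a+1) * x^a) * (1-x)^(b+1) = ... - ∫ (1/(a+1)) x^(a+1) * (-(b+1) (1-x)^b)
      have e1 : ∀ x : ℝ, 1/((a:ℝ)+1) * (((a:ℝ)+1) * x ^ a) * (1-x)^(b+1)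
          = x ^ a * (1-x)^(b+1) := by
        intro x; field_simp
      have e2 : (fun x : ℝ => 1/((a:ℝ)+1) * x ^ (a+1) * (-(((b:ℝ)+1) * (1-x)^b)))
          = fun x : ℝ => (-(((b:ℝ)+1)/((a:ℝ)+1))) * (x ^ (a+1) * (1-x)^b) := by
        funext x; field_simp
      have l1 : ∫ x in (0:ℝ)..1, ((a:ℝ)+1)⁻¹ * (((a:ℝ)+1)*x^a) * (1-x)^(b+1)
          = ∫ x in (0:ℝ)..1, x^a*(1-x)^(b+1) := by
        apply intervalIntegral.integral_congr
        intro x _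
        field_simp
      have l2 : ∫ x in (0:ℝ)..1, ((a:ℝ)+1)⁻¹ * x^(a+1) * ((-1 + -(b:ℝ)) * (1-x)^b)
          = ((-1 - (b:ℝ))/((a:ℝ)+1)) * ∫ x in (0:ℝ)..1, x^(a+1)*(1-x)^b := by
        rw [← intervalIntegral.integral_const_mul]
        apply intervalIntegral.integral_congr
        intro x _
        field_simp
        ring
      rw [l1] at hIBP
      rw [hIBP, l2, ih (a+1)]
      rw [show (a+1)+b+1 = a+b+2 from by omega, show a+(b+1)+1 = a+b+2 from by omega]
      have hfacne : (((a+b+2)! : ℝ)) ≠ 0 := Nat.cast_ne_zero.mpr (Nat.factorial_ne_zero _)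
      push_cast [Nat.factorial_succ]
      field_simp
      ring

end Norms

section Norm2
open Nat

lemma normQ9 (k : ℕ) :
    ∫ x in (0:ℝ)..1, (Q9 k).eval x * (Q9 k).eval x = ((k ! : ℝ))^2 / (2*(k:ℝ)+1) := by
  have hz : derivative^[k] (Q9 k) = C (((2*k)! : ℝ)) := by
    rw [Q9, ← Function.iterate_add_apply, ← topDeriv9]
    congr 1
    omega
  have h := key9 k k le_rfl (Q9 k)
  rw [hz, Nat.sub_self] at h
  simp only [Function.iterate_zero_apply, eval_C] at h
  rw [h]
  have hEv : (fun x : ℝ => eval x (R9 k) * (((2*k)! : ℝ)))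
      = fun x : ℝ => (((2*k)! : ℝ) * (-1:ℝ)^k) * (x^k * (1-x)^k) := by
    funext x
    have h1 : eval x (R9 k) = (x^2 - x)^k := by simp [R9, S9]
    have h2 : (x^2 - x)^k = (-1:ℝ)^k * (x^k * (1-x)^k) := by
      rw [← mul_pow, ← mul_pow]
      congr 1
      ring
    rw [h1, h2]
    ring
  simp only [hEv]
  rw [intervalIntegral.integral_const_mul, beta9 k k]
  rw [show k + k + 1 = 2*k+1 from by omega]
  have h2k : ((2*k+1)! : ℝ) = (2*(k:ℝ)+1) * (((2*k)!) : ℝ) := by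
    rw [Nat.factorial_succ]
    push_cast
    ring
  rw [h2k]
  have hne1 : (((2*k)!) : ℝ) ≠ 0 := Nat.cast_ne_zero.mpr (Nat.factorial_ne_zero _)
  have hne2 : (2*(k:ℝ)+1) ≠ 0 := by positivity
  calc (-1:ℝ)^k * ((((2*k)! : ℝ) * (-1:ℝ)^k) * ((k ! : ℝ) * (k ! : ℝ) / ((2*(k:ℝ)+1) * (((2*k)!) : ℝ))))
      = ((-1:ℝ)^k)^2 * (((2*k)! : ℝ) * ((k ! : ℝ) * (k ! : ℝ)) / ((2*(k:ℝ)+1) * (((2*k)!) : ℝ))) := by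
        ring
    _ = ((k ! : ℝ))^2 / (2*(k:ℝ)+1) := by
        rw [neg_one_pow_sq9, one_mul]
        field_simp

lemma coeffQ9 (k : ℕ) : (Q9 k).coeff k = ((2*k).descFactorial k : ℝ) := by
  rw [Q9, Polynomial.coeff_iterate_derivative]
  have hc : (R9 k).coeff (k + k) = 1 := by
    have hnd : (S9 ^ k).natDegree = 2 * k := natDegree_R9 k
    rw [show R9 k = S9 ^ k from rfl, show k + k = (S9 ^ k).natDegree from by rw [hnd]; omega]
    exact (monic_S9.pow k).coeff_natDegree
  rw [hc, show k + k = 2*k from by omega]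
  simp [nsmul_eq_mul]

lemma coeffQ9_pos (k : ℕ) : 0 < (Q9 k).coeff k := by
  rw [coeffQ9]
  have : (2*k).descFactorial k ≠ 0 := by
    rw [Ne, Nat.descFactorial_eq_zero_iff_lt]
    omega
  have : 0 < (2*k).descFactorial k := Nat.pos_of_ne_zero this
  exact_mod_cast this

lemma natDegree_Q9 (k : ℕ) : (Q9 k).natDegree ≤ k := by
  rw [← Q9_def k]
  have := Polynomial.natDegree_iterate_derivative (R9 k) k
  rw [natDegree_R9] at this
  omega

end Norm2

section Span
open Nat Finset

lemma span9 : ∀ m : ℕ, ∀ p : ℝ[X], p.natDegree ≤ m →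
    ∃ a : ℕ → ℝ, p = ∑ k ∈ Finset.range (m+1), C (a k) * Q9 k := by
  intro m
  induction m with
  | zero =>
      intro p hp
      refine ⟨fun _ => p.coeff 0, ?_⟩
      rw [Finset.sum_range_one]
      have hQ0 : Q9 0 = 1 := by simp [Q9, R9]
      rw [hQ0, mul_one]
      exact Polynomial.eq_C_of_natDegree_le_zero hp
  | succ m ih =>
      intro p hp
      set c : ℝ := p.coeff (m+1) / (Q9 (m+1)).coeff (m+1) with hc
      have hq : (p - C c * Q9 (m+1)).natDegree ≤ m := by
        apply Polynomial.natDegree_le_iff_coeff_eq_zero.mpr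
        intro i hi
        rw [Polynomial.coeff_sub, Polynomial.coeff_C_mul]
        rcases Nat.lt_or_ge i (m+2) with h' | h'
        · have hieq : i = m+1 := by omega
          subst hieq
          rw [hc, div_mul_cancel₀ _ (ne_of_gt (coeffQ9_pos (m+1))), sub_self]
        · have h1 : p.coeff i = 0 := Polynomial.coeff_eq_zero_of_natDegree_lt (by omega)
          have h2 : (Q9 (m+1)).coeff i = 0 :=
            Polynomial.coeff_eq_zero_of_natDegree_lt
              (lt_of_le_of_lt (natDegree_Q9 (m+1)) (by omega))
          rw [h1, h2, mul_zero, sub_zero]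
      obtain ⟨a, ha⟩ := ih _ hq
      refine ⟨fun k => if k = m+1 then c else a k, ?_⟩
      rw [Finset.sum_range_succ]
      have hcong : ∑ k ∈ Finset.range (m+1), C (if k = m+1 then c else a k) * Q9 k
          = ∑ k ∈ Finset.range (m+1), C (a k) * Q9 k :=
        Finset.sum_congr rfl (fun k hk => by
          rw [if_neg (by have := Finset.mem_range.mp hk; omega)])
      have hbeta : (fun k => if k = m+1 then c else a k) (m+1) = c := by simp
      rw [hcong, ← ha, hbeta]
      ring

lemma horth9 (k j : ℕ) (hkj : k ≠ j) :
    ∫ x in (0:ℝ)..1, (Q9 k).eval x * (Q9 j).eval x = 0 := by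
  rcases Nat.lt_or_ge j k with h | h
  · exact orth9 h
  · have hlt : k < j := by omega
    have hcomm : ∫ x in (0:ℝ)..1, (Q9 k).eval x * (Q9 j).eval x
        = ∫ x in (0:ℝ)..1, (Q9 j).eval x * (Q9 k).eval x :=
      intervalIntegral.integral_congr (fun x _ => mul_comm _ _)
    rw [hcomm]
    exact orth9 hlt

lemma hproj9 (n : ℕ) (a : ℕ → ℝ) (j : ℕ) (hj : j ≤ n) :
    ∫ x in (0:ℝ)..1, (∑ k ∈ Finset.range (n+1), C (a k) * Q9 k).eval x * (Q9 j).eval x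
      = a j * (((j ! : ℝ))^2 / (2*(j:ℝ)+1)) := by
  have hint : ∀ k : ℕ, IntervalIntegrable
      (fun x => (C (a k) * Q9 k).eval x * (Q9 j).eval x) MeasureTheory.volume 0 1 :=
    fun k => intble9 _ _
  have e1 : (fun x => (∑ k ∈ Finset.range (n+1), C (a k) * Q9 k).eval x * (Q9 j).eval x)
      = fun x => ∑ k ∈ Finset.range (n+1), (C (a k) * Q9 k).eval x * (Q9 j).eval x := by
    funext x
    rw [Polynomial.eval_finset_sum, Finset.sum_mul]
  rw [e1, intervalIntegral.integral_finset_sum (fun k _ => hint k)]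
  have e2 : ∀ k, ∫ x in (0:ℝ)..1, (C (a k) * Q9 k).eval x * (Q9 j).eval x
      = a k * ∫ x in (0:ℝ)..1, (Q9 k).eval x * (Q9 j).eval x := by
    intro k
    rw [← intervalIntegral.integral_const_mul]
    apply intervalIntegral.integral_congr
    intro x _
    simp only [eval_mul, eval_C]
    ring
  rw [Finset.sum_congr rfl (fun k _ => e2 k)]
  rw [Finset.sum_eq_single j]
  · rw [normQ9]
  · intro k _ hkj
    rw [horth9 k j hkj, mul_zero]
  · intro hjmem
    exact absurd (Finset.mem_range.mpr (by omega)) hjmem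

end Span

section MainBound
open Nat Finset

lemma sumineq9 (n : ℕ) :
    ∑ k ∈ Finset.range (n+1), (2*(k:ℝ)+1) * ((k:ℝ)*((k:ℝ)+1)) ≤ 2*(n:ℝ)^2*((n:ℝ)+1)^2 := by
  induction n with
  | zero => norm_num
  | succ n ih =>
      rw [Finset.sum_range_succ]
      push_cast
      have hn : (0:ℝ) ≤ (n:ℝ) := Nat.cast_nonneg n
      nlinarith [ih, hn]

lemma deriv_bound9 (n : ℕ) (p : ℝ[X]) (hp : p.natDegree ≤ n) (x : ℝ)
    (hx : x ∈ Set.Icc (0:ℝ) 1) :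
    |(derivative p).eval x| ≤ 2*(n:ℝ)^2*((n:ℝ)+1)^2 * ∫ t in (0:ℝ)..1, |p.eval t| := by
  obtain ⟨a, ha⟩ := span9 n p hp
  set I := ∫ t in (0:ℝ)..1, |p.eval t| with hIdef
  have hInonneg : 0 ≤ I :=
    intervalIntegral.integral_nonneg (by norm_num) (fun t _ => abs_nonneg _)
  have hcoeff : ∀ j, j ≤ n → |a j| ≤ (2*(j:ℝ)+1) / (j ! : ℝ) * I := by
    intro j hj
    have hproj := hproj9 n a j hj
    rw [← ha] at hproj
    have hfac : (0:ℝ) < (j ! : ℝ) := by exact_mod_cast j.factorial_pos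
    have habs : |∫ x in (0:ℝ)..1, p.eval x * (Q9 j).eval x| ≤ (j ! : ℝ) * I := by
      calc |∫ x in (0:ℝ)..1, p.eval x * (Q9 j).eval x|
          ≤ ∫ x in (0:ℝ)..1, |p.eval x * (Q9 j).eval x| :=
            intervalIntegral.abs_integral_le_integral_abs (by norm_num)
        _ ≤ ∫ x in (0:ℝ)..1, |p.eval x| * (j ! : ℝ) := by
            apply intervalIntegral.integral_mono_on (by norm_num)
              ((intble9 p (Q9 j)).abs)
              (((contEval p).abs.mul continuous_const).intervalIntegrable 0 1)
            intro t ht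
            rw [abs_mul]
            exact mul_le_mul_of_nonneg_left (B1 j t ht) (abs_nonneg _)
        _ = (j ! : ℝ) * I := by
            rw [hIdef, intervalIntegral.integral_mul_const]
            ring
    have haj : a j = (2*(j:ℝ)+1)/((j ! : ℝ)^2) * ∫ x in (0:ℝ)..1, p.eval x * (Q9 j).eval x := by
      rw [hproj]
      field_simp
    rw [haj, abs_mul, abs_of_pos (show (0:ℝ) < (2*(j:ℝ)+1)/((j ! : ℝ)^2) by positivity)]
    calc (2*(j:ℝ)+1)/((j ! : ℝ)^2) * |∫ x in (0:ℝ)..1, p.eval x * (Q9 j).eval x|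
        ≤ (2*(j:ℝ)+1)/((j ! : ℝ)^2) * ((j ! : ℝ) * I) :=
          mul_le_mul_of_nonneg_left habs (by positivity)
      _ = (2*(j:ℝ)+1) / (j ! : ℝ) * I := by
          field_simp
  have hd : derivative p = ∑ k ∈ Finset.range (n+1), C (a k) * derivative (Q9 k) := by
    rw [ha, derivative_sum]
    exact Finset.sum_congr rfl (fun k _ => derivative_C_mul _ _)
  rw [hd]
  calc |(∑ k ∈ Finset.range (n+1), C (a k) * derivative (Q9 k)).eval x|
      = |∑ k ∈ Finset.range (n+1), a k * (derivative (Q9 k)).eval x| := by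
        rw [Polynomial.eval_finset_sum]
        congr 1
        exact Finset.sum_congr rfl (fun k _ => by rw [eval_mul, eval_C])
    _ ≤ ∑ k ∈ Finset.range (n+1), |a k * (derivative (Q9 k)).eval x| :=
        Finset.abs_sum_le_sum_abs _ _
    _ ≤ ∑ k ∈ Finset.range (n+1), ((2*(k:ℝ)+1) * ((k:ℝ)*((k:ℝ)+1))) * I := by
        apply Finset.sum_le_sum
        intro k hk
        have hkn : k ≤ n := by have := Finset.mem_range.mp hk; omega
        have hfac : (0:ℝ) < (k ! : ℝ) := by exact_mod_cast k.factorial_pos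
        rw [abs_mul]
        calc |a k| * |(derivative (Q9 k)).eval x|
            ≤ ((2*(k:ℝ)+1) / (k ! : ℝ) * I) * ((k:ℝ)*((k:ℝ)+1)*(k ! : ℝ)) := by
              apply mul_le_mul (hcoeff k hkn) (B2 k x hx) (abs_nonneg _)
              positivity
          _ = ((2*(k:ℝ)+1) * ((k:ℝ)*((k:ℝ)+1))) * I := by
              field_simp
    _ = (∑ k ∈ Finset.range (n+1), (2*(k:ℝ)+1) * ((k:ℝ)*((k:ℝ)+1))) * I := by
        rw [← Finset.sum_mul]
    _ ≤ 2*(n:ℝ)^2*((n:ℝ)+1)^2 * I :=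
        mul_le_mul_of_nonneg_right (sumineq9 n) hInonneg

end MainBound

end Legendre9

theorem stmt_9 (f : ℝ → ℝ) (n : ℕ) (hn : 1 ≤ n)
    (hf : ContinuousOn f (Set.Icc 0 1))
    (hf1 : 0 < ∫ x in (0:ℝ)..1, |f x|)
    (p : Polynomial ℝ) (hp : p.natDegree ≤ n)
    (hpQ : (∫ x in (0:ℝ)..1, |p.eval x|) ≤ 2 * ∫ x in (0:ℝ)..1, |f x|) :
    ∀ ε : ℝ, 0 < ε → ∀ x ∈ Set.Icc (0:ℝ) 1, ∀ y ∈ Set.Icc (0:ℝ) 1,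
      |x - y| < ε / (4 * n ^ 2 * (n + 1) ^ 2 * ∫ t in (0:ℝ)..1, |f t|) →
      |p.eval x - p.eval y| < ε := by
  intro ε hε x hx y hy hxy
  have hn1 : (1:ℝ) ≤ (n:ℝ) := by exact_mod_cast hn
  have hn0 : (0:ℝ) < (n:ℝ) := by linarith
  set F := ∫ t in (0:ℝ)..1, |f t| with hFdef
  have hFf : F = ∫ x in (0:ℝ)..1, |f x| := rfl
  have hFpos : 0 < F := by rw [hFf]; exact hf1
  set M : ℝ := 4 * (n:ℝ) ^ 2 * ((n:ℝ) + 1) ^ 2 * F with hMdef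
  have hMpos : 0 < M := by
    rw [hMdef]
    exact mul_pos (mul_pos (mul_pos (by norm_num) (pow_pos hn0 2))
      (pow_pos (by linarith) 2)) hFpos
  have hbound : ∀ z ∈ Set.Icc (0:ℝ) 1, |(Polynomial.derivative p).eval z| ≤ M := by
    intro z hz
    calc |(Polynomial.derivative p).eval z|
        ≤ 2*(n:ℝ)^2*((n:ℝ)+1)^2 * ∫ t in (0:ℝ)..1, |p.eval t| := deriv_bound9 n p hp z hz
      _ ≤ 2*(n:ℝ)^2*((n:ℝ)+1)^2 * (2 * F) := by
          apply mul_le_mul_of_nonneg_left _ (by positivity)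
          rw [hFf]
          exact hpQ
      _ = M := by rw [hMdef]; ring
  have hlip : |p.eval x - p.eval y| ≤ M * |x - y| := by
    have h := Convex.norm_image_sub_le_of_norm_hasDerivWithin_le
      (f := fun t : ℝ => p.eval t) (f' := fun t : ℝ => (Polynomial.derivative p).eval t)
      (fun z _ => (Polynomial.hasDerivAt p z).hasDerivWithinAt)
      (fun z hz => by rw [Real.norm_eq_abs]; exact hbound z hz)
      (convex_Icc (0:ℝ) 1) hy hx
    simpa [Real.norm_eq_abs] using h
  have hxyM : |x - y| < ε / M := hxy
  calc |p.eval x - p.eval y| ≤ M * |x - y| := hlip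
    _ < M * (ε / M) := (mul_lt_mul_iff_right₀ hMpos).mpr hxyM
    _ = ε := by field_simp
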